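/- With notation as in the previous statement, for a given nonzero a ∈ g₃*, the null space of a∘ς has dimension m. -/

import Mathlib

open TensorProduct Module

lemma aux_pure {Λ M : Type*} [AddCommGroup Λ] [Module ℂ Λ]
    [AddCommGroup M] [Module ℂ M]
    (l₀ : Λ) (χ : Λ →ₗ[ℂ] ℂ) (hl0 : ∀ l, χ l • l₀ = l) (t : Λ ⊗[ℂ] M) :
    ∃ m : M, t = l₀ ⊗ₜ[ℂ] m := by
  induction t using TensorProduct.induction_on with
  | zero => exact ⟨0, (TensorProduct.tmul_zero _ _).symm⟩
  | tmul l m =>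
      refine ⟨χ l • m, ?_⟩
      have h : (χ l • l₀) ⊗ₜ[ℂ] m = l₀ ⊗ₜ[ℂ] (χ l • m) := smul_tmul (χ l) l₀ m
      rw [hl0] at h
      exact h
  | add s t hs ht =>
      obtain ⟨ms, hms⟩ := hs; obtain ⟨mt, hmt⟩ := ht
      exact ⟨ms + mt, by rw [hms, hmt, TensorProduct.tmul_add]⟩

set_option maxHeartbeats 2000000 in
/-- For a nonzero `a ∈ g₃*`, the null space of the antisymmetric form
`a∘ς` on `g₁ ⊕ g₂` (where `ς` is the bracket of `g₊(F)` modulo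
`g₁ ⊕ g₂`) has dimension `m = dim V`. -/
theorem stmt9
    (U V I Λ : Type*)
    [AddCommGroup U] [Module ℂ U] [AddCommGroup V] [Module ℂ V]
    [AddCommGroup I] [Module ℂ I] [AddCommGroup Λ] [Module ℂ Λ]
    [FiniteDimensional ℂ U] [FiniteDimensional ℂ V] [FiniteDimensional ℂ I]
    [FiniteDimensional ℂ Λ]
    (hU : finrank ℂ U = 2) (hI : finrank ℂ I = 1) (hΛ : finrank ℂ Λ = 1)
    (wedge : U →ₗ[ℂ] U →ₗ[ℂ] Λ) (hwalt : ∀ u : U, wedge u u = 0)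
    (hwne : wedge ≠ 0)
    (F : V →ₗ[ℂ] V →ₗ[ℂ] V →ₗ[ℂ] I)
    (hFsymm12 : ∀ v₁ v₂ : V, F v₁ v₂ = F v₂ v₁)
    (hFsymm23 : ∀ v₁ v₂ v₃ : V, F v₁ v₂ v₃ = F v₁ v₃ v₂)
    (Br : ((U ⊗[ℂ] V) × (Λ ⊗[ℂ] (V →ₗ[ℂ] I)) × (Λ ⊗[ℂ] (I ⊗[ℂ] U)))
        →ₗ[ℂ] ((U ⊗[ℂ] V) × (Λ ⊗[ℂ] (V →ₗ[ℂ] I)) × (Λ ⊗[ℂ] (I ⊗[ℂ] U)))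
        →ₗ[ℂ] ((U ⊗[ℂ] V) × (Λ ⊗[ℂ] (V →ₗ[ℂ] I)) × (Λ ⊗[ℂ] (I ⊗[ℂ] U))))
    (hanti : ∀ x y, Br x y = - Br y x)
    (h11 : ∀ (u₁ : U) (v₁ : V) (u₂ : U) (v₂ : V),
      Br (u₁ ⊗ₜ[ℂ] v₁, 0, 0) (u₂ ⊗ₜ[ℂ] v₂, 0, 0)
        = (0, (wedge u₁ u₂) ⊗ₜ[ℂ] (F v₁ v₂), 0))
    (h21 : ∀ (l : Λ) (f : V →ₗ[ℂ] I) (u₃ : U) (v₃ : V),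
      Br (0, l ⊗ₜ[ℂ] f, 0) (u₃ ⊗ₜ[ℂ] v₃, 0, 0)
        = (0, 0, l ⊗ₜ[ℂ] ((f v₃) ⊗ₜ[ℂ] u₃)))
    (h22 : ∀ (b b' : Λ ⊗[ℂ] (V →ₗ[ℂ] I)),
      Br (0, b, 0) (0, b', 0) = 0)
    (h3 : ∀ (c : Λ ⊗[ℂ] (I ⊗[ℂ] U)) x, Br (0, 0, c) x = 0)
    (m : ℕ) (hV : finrank ℂ V = m)
    (a : (Λ ⊗[ℂ] (I ⊗[ℂ] U)) →ₗ[ℂ] ℂ) (ha : a ≠ 0) :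
    ∃ N : Submodule ℂ
        ((U ⊗[ℂ] V) × (Λ ⊗[ℂ] (V →ₗ[ℂ] I)) × (Λ ⊗[ℂ] (I ⊗[ℂ] U))),
      (∀ x, x ∈ N ↔
        (x.2.2 = 0 ∧ ∀ y, y.2.2 = 0 → a ((Br x y).2.2) = 0)) ∧
      finrank ℂ N = m := by
  classical
  -- bases of the one-dimensional spaces Λ and I
  set bL := finBasisOfFinrankEq ℂ Λ hΛ with hbL
  set bI := finBasisOfFinrankEq ℂ I hI with hbI
  set l₀ : Λ := bL 0 with hl₀def
  set i₀ : I := bI 0 with hi₀def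
  set χL : Λ →ₗ[ℂ] ℂ := bL.coord 0 with hχLdef
  set χI : I →ₗ[ℂ] ℂ := bI.coord 0 with hχIdef
  have hlrep : ∀ l : Λ, χL l • l₀ = l := by
    intro l
    have h := bL.sum_repr l
    simpa [Fin.sum_univ_one, hχLdef, hl₀def, Basis.coord_apply] using h
  have hirep : ∀ i : I, χI i • i₀ = i := by
    intro i
    have h := bI.sum_repr i
    simpa [Fin.sum_univ_one, hχIdef, hi₀def, Basis.coord_apply] using h
  have hχLl₀ : χL l₀ = 1 := by simp [hχLdef, hl₀def, Basis.coord_apply]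
  have hχIi₀ : χI i₀ = 1 := by simp [hχIdef, hi₀def, Basis.coord_apply]
  have hχIinj : ∀ i : I, χI i = 0 → i = 0 := by
    intro i h
    rw [← hirep i, h, zero_smul]
  -- the functional α on U induced by a
  set ι : U →ₗ[ℂ] Λ ⊗[ℂ] (I ⊗[ℂ] U) :=
    (TensorProduct.mk ℂ Λ (I ⊗[ℂ] U) l₀) ∘ₗ (TensorProduct.mk ℂ I U i₀) with hιdef
  have hι : ∀ u : U, ι u = l₀ ⊗ₜ[ℂ] (i₀ ⊗ₜ[ℂ] u) := fun u => rfl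
  set α : U →ₗ[ℂ] ℂ := a ∘ₗ ι with hαdef
  have hα : ∀ u : U, α u = a (l₀ ⊗ₜ[ℂ] (i₀ ⊗ₜ[ℂ] u)) := fun u => rfl
  have ha_pure : ∀ (l : Λ) (i : I) (u : U),
      a (l ⊗ₜ[ℂ] (i ⊗ₜ[ℂ] u)) = χL l * χI i * α u := by
    intro l i u
    conv_lhs => rw [← hlrep l, ← hirep i]
    rw [← TensorProduct.smul_tmul' (χL l) l₀ _, ← TensorProduct.smul_tmul' (χI i) i₀ u,
      tmul_smul, map_smul, map_smul, smul_eq_mul, smul_eq_mul, ← hα]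
    ring
  -- the map β : U ⊗ V → V
  set β : U ⊗[ℂ] V →ₗ[ℂ] V :=
    (TensorProduct.lid ℂ V).toLinearMap ∘ₗ (LinearMap.rTensor V α) with hβdef
  have hβ : ∀ (u : U) (v : V), β (u ⊗ₜ[ℂ] v) = α u • v := by
    intro u v; simp [hβdef]
  -- inclusions and projection
  set j₁ : (U ⊗[ℂ] V) →ₗ[ℂ]
      ((U ⊗[ℂ] V) × (Λ ⊗[ℂ] (V →ₗ[ℂ] I)) × (Λ ⊗[ℂ] (I ⊗[ℂ] U))) :=
    LinearMap.inl ℂ _ _ with hj₁def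
  set j₂ : (Λ ⊗[ℂ] (V →ₗ[ℂ] I)) →ₗ[ℂ]
      ((U ⊗[ℂ] V) × (Λ ⊗[ℂ] (V →ₗ[ℂ] I)) × (Λ ⊗[ℂ] (I ⊗[ℂ] U))) :=
    (LinearMap.inr ℂ (U ⊗[ℂ] V) _) ∘ₗ (LinearMap.inl ℂ _ (Λ ⊗[ℂ] (I ⊗[ℂ] U))) with hj₂def
  have hj₁ : ∀ p, j₁ p = (p, 0, 0) := fun p => rfl
  have hj₂ : ∀ b, j₂ b = (0, b, 0) := fun b => rfl
  -- the comparison bilinear functional E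
  set E : (Λ ⊗[ℂ] (V →ₗ[ℂ] I)) →ₗ[ℂ] (V →ₗ[ℂ] ℂ) :=
    TensorProduct.lift (χL.smulRight ((LinearMap.llcomp ℂ V I ℂ) χI)) with hEdef
  have hE : ∀ (l : Λ) (f : V →ₗ[ℂ] I) (v : V),
      E (l ⊗ₜ[ℂ] f) v = χL l * χI (f v) := by
    intro l f v
    simp [hEdef]
  -- the key identity: a ((Br (j₂ b) (j₁ p)).2.2) = E b (β p)
  have hK : ∀ (b : Λ ⊗[ℂ] (V →ₗ[ℂ] I)) (p : U ⊗[ℂ] V),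
      a ((Br (j₂ b) (j₁ p)).2.2) = E b (β p) := by
    have hKE : (((Br ∘ₗ j₂).compl₂ j₁).compr₂
          (a ∘ₗ ((LinearMap.snd ℂ _ _) ∘ₗ (LinearMap.snd ℂ (U ⊗[ℂ] V) _))))
        = E.compl₂ β := by
      apply TensorProduct.ext'
      intro l f
      apply TensorProduct.ext'
      intro u v
      simp only [LinearMap.compr₂_apply, LinearMap.compl₂_apply, LinearMap.coe_comp,
        Function.comp_apply, LinearMap.snd_apply]
      rw [hj₂, hj₁, h21]
      rw [hE, hβ]  -- may need adjusting
      rw [ha_pure]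
      simp [smul_eq_mul]
      ring
    intro b p
    have h := LinearMap.congr_fun (LinearMap.congr_fun hKE b) p
    simpa [LinearMap.compr₂_apply, LinearMap.compl₂_apply] using h
  -- the g₁-g₁ bracket has no g₃ component
  have hM : ∀ p q : U ⊗[ℂ] V, (Br (j₁ p) (j₁ q)).2.2 = 0 := by
    have hMB : (((Br ∘ₗ j₁).compl₂ j₁).compr₂
          ((LinearMap.snd ℂ _ _) ∘ₗ (LinearMap.snd ℂ (U ⊗[ℂ] V) _))) = 0 := by
      apply TensorProduct.ext'
      intro u v
      apply TensorProduct.ext'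
      intro u' v'
      simp only [LinearMap.compr₂_apply, LinearMap.compl₂_apply, LinearMap.coe_comp,
        Function.comp_apply, LinearMap.snd_apply, LinearMap.zero_apply]
      rw [hj₁, hj₁, h11]
    intro p q
    have h := LinearMap.congr_fun (LinearMap.congr_fun hMB p) q
    simpa [LinearMap.compr₂_apply, LinearMap.compl₂_apply] using h
  -- E has trivial kernel
  have hEinj : ∀ b, E b = 0 → b = 0 := by
    intro b hb
    obtain ⟨f, rfl⟩ := aux_pure l₀ χL hlrep b
    have hf : ∀ v, χI (f v) = 0 := by
      intro v
      have h := LinearMap.congr_fun hb v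
      rw [hE, hχLl₀, one_mul] at h
      simpa using h
    have hf0 : f = 0 := LinearMap.ext fun v => hχIinj _ (hf v)
    rw [hf0, TensorProduct.tmul_zero]
  -- α is nonzero, hence β is surjective
  have hsurjι : Function.Surjective ι := by
    intro t
    obtain ⟨s, rfl⟩ := aux_pure l₀ χL hlrep t
    obtain ⟨u, rfl⟩ := aux_pure i₀ χI hirep s
    exact ⟨u, rfl⟩
  have hαne : ∃ u₀, α u₀ ≠ 0 := by
    by_contra h
    push_neg at h
    apply ha
    apply LinearMap.ext
    intro t
    obtain ⟨u, rfl⟩ := hsurjι t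
    exact h u
  obtain ⟨u₀, hu₀⟩ := hαne
  have hβsurj : Function.Surjective β := by
    intro v
    refine ⟨u₀ ⊗ₜ[ℂ] ((α u₀)⁻¹ • v), ?_⟩
    rw [hβ, smul_smul, mul_inv_cancel₀ hu₀, one_smul]
  -- decomposition of elements with vanishing third coordinate
  have hdec : ∀ y : ((U ⊗[ℂ] V) × (Λ ⊗[ℂ] (V →ₗ[ℂ] I)) × (Λ ⊗[ℂ] (I ⊗[ℂ] U))),
      y.2.2 = 0 → y = j₁ y.1 + j₂ y.2.1 := by
    rintro ⟨p, b, c⟩ hy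
    simp only at hy
    subst hy
    rw [hj₁, hj₂]
    simp [Prod.ext_iff]
  -- the null space
  set Φ : ((U ⊗[ℂ] V) × (Λ ⊗[ℂ] (V →ₗ[ℂ] I)) × (Λ ⊗[ℂ] (I ⊗[ℂ] U))) →ₗ[ℂ]
      (V × (Λ ⊗[ℂ] (V →ₗ[ℂ] I)) × (Λ ⊗[ℂ] (I ⊗[ℂ] U))) :=
    β.prodMap (LinearMap.id.prodMap LinearMap.id) with hΦdef
  have hmem : ∀ x, x ∈ LinearMap.ker Φ ↔ (β x.1 = 0 ∧ x.2.1 = 0 ∧ x.2.2 = 0) := by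
    rintro ⟨p, b, c⟩
    simp [hΦdef, LinearMap.mem_ker, Prod.ext_iff]
  refine ⟨LinearMap.ker Φ, ?_, ?_⟩
  · intro x
    rw [hmem]
    constructor
    · rintro ⟨hβp, hb0, hc0⟩
      refine ⟨hc0, ?_⟩
      intro y hy
      have hx : x = j₁ x.1 := by
        have h := hdec x hc0
        rw [hb0, map_zero, add_zero] at h
        exact h
      rw [hx, hdec y hy, map_add]
      have h2 : a ((Br (j₁ x.1) (j₂ y.2.1)).2.2) = 0 := by
        rw [hanti (j₁ x.1) (j₂ y.2.1)]
        have : (-(Br (j₂ y.2.1) (j₁ x.1))).2.2 = -((Br (j₂ y.2.1) (j₁ x.1)).2.2) := rfl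
        rw [this, map_neg, hK, hβp, map_zero, neg_zero]
      have h1 : (Br (j₁ x.1) (j₁ y.1)).2.2 = 0 := hM _ _
      have hsnd : ((Br (j₁ x.1) (j₁ y.1)) + (Br (j₁ x.1) (j₂ y.2.1))).2.2
          = (Br (j₁ x.1) (j₁ y.1)).2.2 + (Br (j₁ x.1) (j₂ y.2.1)).2.2 := rfl
      rw [hsnd, h1, zero_add]
      exact h2
    · rintro ⟨hc0, H⟩
      have hx := hdec x hc0
      have hbr : ∀ q : U ⊗[ℂ] V, E x.2.1 (β q) = 0 := by
        intro q
        have h := H (j₁ q) rfl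
        rw [hx, map_add, LinearMap.add_apply] at h
        have hsnd : ((Br (j₁ x.1) (j₁ q)) + (Br (j₂ x.2.1) (j₁ q))).2.2
            = (Br (j₁ x.1) (j₁ q)).2.2 + (Br (j₂ x.2.1) (j₁ q)).2.2 := rfl
        rw [hsnd, hM, zero_add, hK] at h
        exact h
      have hb0 : x.2.1 = 0 := by
        apply hEinj
        apply LinearMap.ext
        intro v
        obtain ⟨q, hq⟩ := hβsurj v
        rw [← hq]
        simpa using hbr q
      have hβ0 : β x.1 = 0 := by
        rw [← Module.forall_dual_apply_eq_zero_iff ℂ (β x.1)]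
        intro g
        set f : V →ₗ[ℂ] I := g.smulRight i₀ with hfdef
        have h := H (j₂ (l₀ ⊗ₜ[ℂ] f)) rfl
        rw [hx, map_add, LinearMap.add_apply] at h
        have hsnd : ((Br (j₁ x.1) (j₂ (l₀ ⊗ₜ[ℂ] f))) + (Br (j₂ x.2.1) (j₂ (l₀ ⊗ₜ[ℂ] f)))).2.2
            = (Br (j₁ x.1) (j₂ (l₀ ⊗ₜ[ℂ] f))).2.2 + (Br (j₂ x.2.1) (j₂ (l₀ ⊗ₜ[ℂ] f))).2.2 := rfl
        have h22' : Br (j₂ x.2.1) (j₂ (l₀ ⊗ₜ[ℂ] f)) = 0 := h22 _ _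
        rw [hsnd, h22'] at h
        have hanti' : a ((Br (j₁ x.1) (j₂ (l₀ ⊗ₜ[ℂ] f))).2.2)
            = -(E (l₀ ⊗ₜ[ℂ] f) (β x.1)) := by
          rw [hanti (j₁ x.1) (j₂ (l₀ ⊗ₜ[ℂ] f))]
          have : (-(Br (j₂ (l₀ ⊗ₜ[ℂ] f)) (j₁ x.1))).2.2
              = -((Br (j₂ (l₀ ⊗ₜ[ℂ] f)) (j₁ x.1)).2.2) := rfl
          rw [this, map_neg, hK]
        have hEval : E (l₀ ⊗ₜ[ℂ] f) (β x.1) = g (β x.1) := by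
          rw [hE, hχLl₀, one_mul, hfdef]
          simp [hχIi₀]
        have hzero : a (((Br (j₁ x.1) (j₂ (l₀ ⊗ₜ[ℂ] f))).2.2 + (0 :
            ((U ⊗[ℂ] V) × (Λ ⊗[ℂ] (V →ₗ[ℂ] I)) × (Λ ⊗[ℂ] (I ⊗[ℂ] U)))).2.2)) = 0 := h
        rw [show ((0 : ((U ⊗[ℂ] V) × (Λ ⊗[ℂ] (V →ₗ[ℂ] I)) × (Λ ⊗[ℂ] (I ⊗[ℂ] U)))).2.2
            = (0 : Λ ⊗[ℂ] (I ⊗[ℂ] U))) from rfl, add_zero] at hzero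
        rw [hanti', hEval] at hzero
        exact neg_eq_zero.mp hzero
      exact ⟨hβ0, hb0, hc0⟩
  · have hsurjΦ : Function.Surjective Φ := by
      rintro ⟨v, b, c⟩
      obtain ⟨p, hp⟩ := hβsurj v
      exact ⟨(p, b, c), by simp [hΦdef, hp]⟩
    have hrn := LinearMap.finrank_range_add_finrank_ker Φ
    rw [LinearMap.range_eq_top.mpr hsurjΦ, finrank_top] at hrn
    have hdom : finrank ℂ ((U ⊗[ℂ] V) × (Λ ⊗[ℂ] (V →ₗ[ℂ] I)) × (Λ ⊗[ℂ] (I ⊗[ℂ] U)))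
        = 2 * m + (finrank ℂ (Λ ⊗[ℂ] (V →ₗ[ℂ] I)) + finrank ℂ (Λ ⊗[ℂ] (I ⊗[ℂ] U))) := by
      rw [Module.finrank_prod, Module.finrank_prod, Module.finrank_tensorProduct, hU, hV]
    have hcod : finrank ℂ (V × (Λ ⊗[ℂ] (V →ₗ[ℂ] I)) × (Λ ⊗[ℂ] (I ⊗[ℂ] U)))
        = m + (finrank ℂ (Λ ⊗[ℂ] (V →ₗ[ℂ] I)) + finrank ℂ (Λ ⊗[ℂ] (I ⊗[ℂ] U))) := by
      rw [Module.finrank_prod, Module.finrank_prod, hV]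
    rw [hcod, hdom] at hrn
    omega
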